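/- Let $E,A\in\mathbb{C}^{n\times n}$, $B\in\mathbb{C}^{n\times m}$ with $B\neq 0$, $G(z)=(zE-A)^{-1}B$, and let $\widetilde{G}$ be the interpolatory barycentric surrogate with distinct support points $z_j$ (each $z_jE-A$ invertible) and weights $q_j$, with denominator $Q(z)=\sum_j q_j/(z-z_j)$. Then for every $z$ with $zE-A$ invertible, $z\notin\{z_1,\dots,z_S\}$, and $Q(z)\neq 0$, the relative error satisfies $\|\widetilde{G}(z)-G(z)\|_F/\|G(z)\|_F\le \gamma\,\mathcal{K}(zE-A)\,|Q(z)|^{-1}$, where $\gamma=\|\sum_j q_jEG(z_j)\|_F/\|B\|_F$ and $\mathcal{K}(M)$ denotes the ratio of the largest to the smallest singular value of $M$. (Here $G(z)\neq 0$ since $B\neq 0$ and $zE-A$ is invertible.) -/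
import Mathlib


/-- The Frobenius norm of a complex matrix. -/
noncomputable def frob {a b : ℕ} (M : Matrix (Fin a) (Fin b) ℂ) : ℝ :=
  Real.sqrt (∑ i, ∑ j, ‖M i j‖ ^ 2)

/-- The spectral norm (largest singular value) of a complex matrix. -/
noncomputable def spec {a b : ℕ} (M : Matrix (Fin a) (Fin b) ℂ) : ℝ :=
  ‖LinearMap.toContinuousLinearMap (Matrix.toEuclideanLin M)‖

/-- The (Euclidean) condition number of an invertible matrix: the ratio of its largest
and smallest singular values, i.e. `σ_max(M) * σ_max(M⁻¹)`. -/
noncomputable def condNum {a : ℕ} (M : Matrix (Fin a) (Fin a) ℂ) : ℝ :=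
  spec M * spec M⁻¹

/-- Relative error bound for the state surrogate:
`‖G̃(z) - G(z)‖_F / ‖G(z)‖_F ≤ γ 𝒦(zE - A) |Q(z)|⁻¹`. -/
lemma frob_nonneg {a b : ℕ} (M : Matrix (Fin a) (Fin b) ℂ) : 0 ≤ frob M :=
  Real.sqrt_nonneg _

lemma spec_nonneg {a b : ℕ} (M : Matrix (Fin a) (Fin b) ℂ) : 0 ≤ spec M :=
  norm_nonneg _

lemma frob_pos {a b : ℕ} {M : Matrix (Fin a) (Fin b) ℂ} (h : M ≠ 0) : 0 < frob M := by
  have : ∃ i j, M i j ≠ 0 := by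
    by_contra h'
    push_neg at h'
    exact h (by ext i j; simpa using h' i j)
  obtain ⟨i, j, hij⟩ := this
  apply Real.sqrt_pos.mpr
  have h1 : ‖M i j‖ ^ 2 ≤ ∑ j', ‖M i j'‖ ^ 2 :=
    Finset.single_le_sum (f := fun j' => ‖M i j'‖ ^ 2) (fun _ _ => sq_nonneg _) (Finset.mem_univ j)
  have h2 : ∑ j', ‖M i j'‖ ^ 2 ≤ ∑ i', ∑ j', ‖M i' j'‖ ^ 2 :=
    Finset.single_le_sum (f := fun i' => ∑ j', ‖M i' j'‖ ^ 2)
      (fun _ _ => Finset.sum_nonneg fun _ _ => sq_nonneg _) (Finset.mem_univ i)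
  have : 0 < ‖M i j‖ ^ 2 := pow_pos (norm_pos_iff.mpr hij) 2
  linarith

lemma frob_smul {a b : ℕ} (c : ℂ) (M : Matrix (Fin a) (Fin b) ℂ) :
    frob (c • M) = ‖c‖ * frob M := by
  unfold frob
  have : ∀ i j, ‖(c • M) i j‖ ^ 2 = ‖c‖ ^ 2 * ‖M i j‖ ^ 2 := by
    intro i j
    simp [Matrix.smul_apply, norm_mul, mul_pow]
  simp_rw [this, ← Finset.mul_sum]
  rw [Real.sqrt_mul (sq_nonneg _), Real.sqrt_sq (norm_nonneg _)]

lemma frob_mul_le {a b c : ℕ} (M : Matrix (Fin a) (Fin b) ℂ) (N : Matrix (Fin b) (Fin c) ℂ) :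
    frob (M * N) ≤ spec M * frob N := by
  classical
  set col : Fin c → EuclideanSpace ℂ (Fin b) :=
    fun j => (WithLp.equiv 2 (Fin b → ℂ)).symm (fun i => N i j)
  have hcol : ∀ j, ‖col j‖ ^ 2 = ∑ i, ‖N i j‖ ^ 2 := by
    intro j
    rw [EuclideanSpace.norm_eq, Real.sq_sqrt (Finset.sum_nonneg fun _ _ => sq_nonneg _)]
    rfl
  have happ : ∀ j i, (Matrix.toEuclideanLin M (col j)) i = (M * N) i j := by
    intro j i
    show Matrix.mulVec M (fun i => N i j) i = (M * N) i j
    simp [Matrix.mulVec, Matrix.mul_apply, dotProduct]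
  have hMcol : ∀ j, ∑ i, ‖(M * N) i j‖ ^ 2 = ‖Matrix.toEuclideanLin M (col j)‖ ^ 2 := by
    intro j
    rw [EuclideanSpace.norm_eq, Real.sq_sqrt (Finset.sum_nonneg fun _ _ => sq_nonneg _)]
    simp_rw [happ]
  have hbound : ∀ j, ‖Matrix.toEuclideanLin M (col j)‖ ^ 2 ≤ spec M ^ 2 * ‖col j‖ ^ 2 := by
    intro j
    have h1 := (LinearMap.toContinuousLinearMap (Matrix.toEuclideanLin M)).le_opNorm (col j)
    simp only [LinearMap.coe_toContinuousLinearMap'] at h1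
    have h2 : ‖Matrix.toEuclideanLin M (col j)‖ ≤ spec M * ‖col j‖ := h1
    have h0 : (0:ℝ) ≤ ‖Matrix.toEuclideanLin M (col j)‖ := norm_nonneg _
    nlinarith [norm_nonneg (col j), spec_nonneg M]
  unfold frob
  rw [Finset.sum_comm]
  have hsum : ∑ j, ∑ i, ‖(M * N) i j‖ ^ 2 ≤ spec M ^ 2 * ∑ i, ∑ j, ‖N i j‖ ^ 2 := by
    rw [Finset.sum_comm (f := fun i j => ‖N i j‖ ^ 2)]
    calc ∑ j, ∑ i, ‖(M * N) i j‖ ^ 2 = ∑ j, ‖Matrix.toEuclideanLin M (col j)‖ ^ 2 := by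
          simp_rw [hMcol]
      _ ≤ ∑ j, spec M ^ 2 * ‖col j‖ ^ 2 := Finset.sum_le_sum fun j _ => hbound j
      _ = spec M ^ 2 * ∑ j, ∑ i, ‖N i j‖ ^ 2 := by rw [← Finset.mul_sum]; simp_rw [hcol]
  calc Real.sqrt (∑ j, ∑ i, ‖(M * N) i j‖ ^ 2)
      ≤ Real.sqrt (spec M ^ 2 * ∑ i, ∑ j, ‖N i j‖ ^ 2) := Real.sqrt_le_sqrt hsum
    _ = spec M * Real.sqrt (∑ i, ∑ j, ‖N i j‖ ^ 2) := by
        rw [Real.sqrt_mul (sq_nonneg _), Real.sqrt_sq (spec_nonneg M)]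

theorem state_relative_error_bound'
    {n m S : ℕ}
    (E A : Matrix (Fin n) (Fin n) ℂ) (B : Matrix (Fin n) (Fin m) ℂ)
    (hB : B ≠ 0)
    (z : Fin S → ℂ) (hz : Function.Injective z)
    (hinv : ∀ j, IsUnit (z j • E - A))
    (q : Fin S → ℂ)
    (G : ℂ → Matrix (Fin n) (Fin m) ℂ)
    (hG : ∀ w, G w = (w • E - A)⁻¹ * B)
    (Q : ℂ → ℂ) (hQ : ∀ w, Q w = ∑ j, q j / (w - z j))
    (Gt : ℂ → Matrix (Fin n) (Fin m) ℂ)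
    (hGt : ∀ w, Gt w = (Q w)⁻¹ • ∑ j, (q j / (w - z j)) • G (z j))
    (γ : ℝ) (hγ : γ = frob (∑ j, q j • (E * G (z j))) / frob B) :
    ∀ w : ℂ, IsUnit (w • E - A) → w ∉ Set.range z → Q w ≠ 0 →
      frob (Gt w - G w) / frob (G w) ≤ γ * (spec (w • E - A) * spec (w • E - A)⁻¹) * ‖Q w‖⁻¹ := by
  intro w hw hwz hQw
  have hdet : IsUnit (w • E - A).det := (Matrix.isUnit_iff_isUnit_det _).mp hw
  have hne : ∀ j, w - z j ≠ 0 := fun j h => hwz ⟨j, (sub_eq_zero.mp h).symm⟩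
  set R : Matrix (Fin n) (Fin m) ℂ := ∑ j, q j • (E * G (z j)) with hR
  -- residual identity for each support point
  have hMG : ∀ j, (w • E - A) * G (z j) = B + (w - z j) • (E * G (z j)) := by
    intro j
    have hdj := (Matrix.isUnit_iff_isUnit_det _).mp (hinv j)
    have hX : (z j • E - A) * G (z j) = B := by
      rw [hG, ← Matrix.mul_assoc, Matrix.mul_nonsing_inv _ hdj, Matrix.one_mul]
    have hsplit : w • E - A = (z j • E - A) + (w - z j) • E := by
      rw [sub_smul]; abel
    rw [hsplit, Matrix.add_mul, hX, Matrix.smul_mul]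
  -- M * Gt w = B + Q(w)⁻¹ • R
  have hMGt : (w • E - A) * Gt w = B + (Q w)⁻¹ • R := by
    rw [hGt, Matrix.mul_smul, Matrix.mul_sum]
    simp_rw [Matrix.mul_smul, hMG]
    have hterm : ∀ j : Fin S, (q j / (w - z j)) • (B + (w - z j) • (E * G (z j)))
        = (q j / (w - z j)) • B + q j • (E * G (z j)) := by
      intro j
      rw [smul_add, smul_smul, div_mul_cancel₀ _ (hne j)]
    simp_rw [hterm, Finset.sum_add_distrib, smul_add, ← Finset.sum_smul, ← hQ, ← hR,
      inv_smul_smul₀ hQw]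
  -- error = Q(w)⁻¹ • M⁻¹ R
  have hdiff : Gt w - G w = (Q w)⁻¹ • ((w • E - A)⁻¹ * R) := by
    have h1 : Gt w = (w • E - A)⁻¹ * ((w • E - A) * Gt w) := by
      rw [← Matrix.mul_assoc, Matrix.nonsing_inv_mul _ hdet, Matrix.one_mul]
    rw [h1, hMGt, Matrix.mul_add, Matrix.mul_smul, hG]
    abel
  have hBeq : B = (w • E - A) * G w := by
    rw [hG, ← Matrix.mul_assoc, Matrix.mul_nonsing_inv _ hdet, Matrix.one_mul]
  have hGne : G w ≠ 0 := fun h => hB (by rw [hBeq, h, Matrix.mul_zero])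
  have hgpos : 0 < frob (G w) := frob_pos hGne
  have hbpos : 0 < frob B := frob_pos hB
  have hd : frob (Gt w - G w) ≤ ‖Q w‖⁻¹ * (spec (w • E - A)⁻¹ * frob R) := by
    rw [hdiff, frob_smul, norm_inv]
    exact mul_le_mul_of_nonneg_left (frob_mul_le _ _) (by positivity)
  have hb : frob B ≤ spec (w • E - A) * frob (G w) := by
    rw [hBeq]; exact frob_mul_le _ _
  rw [div_le_iff₀ hgpos, hγ]
  have hr : (0:ℝ) ≤ frob R := frob_nonneg _
  have key : frob R ≤ (frob R / frob B) * (spec (w • E - A) * frob (G w)) := by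
    calc frob R = (frob R / frob B) * frob B := (div_mul_cancel₀ _ hbpos.ne').symm
      _ ≤ (frob R / frob B) * (spec (w • E - A) * frob (G w)) :=
          mul_le_mul_of_nonneg_left hb (by positivity)
  calc frob (Gt w - G w) ≤ ‖Q w‖⁻¹ * (spec (w • E - A)⁻¹ * frob R) := hd
    _ ≤ ‖Q w‖⁻¹ * (spec (w • E - A)⁻¹ *
        ((frob R / frob B) * (spec (w • E - A) * frob (G w)))) := by
        gcongr
        · exact spec_nonneg _
    _ = frob R / frob B * (spec (w • E - A) * spec (w • E - A)⁻¹) * ‖Q w‖⁻¹ * frob (G w) := by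
        ring

theorem state_relative_error_bound
    {n m S : ℕ}
    (E A : Matrix (Fin n) (Fin n) ℂ) (B : Matrix (Fin n) (Fin m) ℂ)
    (hB : B ≠ 0)
    (z : Fin S → ℂ) (hz : Function.Injective z)
    (hinv : ∀ j, IsUnit (z j • E - A))
    (q : Fin S → ℂ)
    (G : ℂ → Matrix (Fin n) (Fin m) ℂ)
    (hG : ∀ w, G w = (w • E - A)⁻¹ * B)
    (Q : ℂ → ℂ) (hQ : ∀ w, Q w = ∑ j, q j / (w - z j))
    (Gt : ℂ → Matrix (Fin n) (Fin m) ℂ)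
    (hGt : ∀ w, Gt w = (Q w)⁻¹ • ∑ j, (q j / (w - z j)) • G (z j))
    (γ : ℝ) (hγ : γ = frob (∑ j, q j • (E * G (z j))) / frob B) :
    ∀ w : ℂ, IsUnit (w • E - A) → w ∉ Set.range z → Q w ≠ 0 →
      frob (Gt w - G w) / frob (G w) ≤ γ * condNum (w • E - A) * ‖Q w‖⁻¹ := by
  intro w hw hwz hQw
  have h := state_relative_error_bound' E A B hB z hz hinv q G hG Q hQ Gt hGt γ hγ w hw hwz hQw
  simpa [condNum] using h
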